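/- Let n and p be positive integers and let A be a finite set of integers consisting of exactly n negative integers, exactly p positive integers, and 0. If α is an integer with 0 ≤ α ≤ n + p + 1, α > n, and α > p, then |Σ_α(A)| ≥ n(n+1)/2 + p(p+1)/2 − (α−n)(α−n−1)/2 − (α−p)(α−p−1)/2 + 1. -/
import Mathlib


/-- `sigmaAtLeast A α` is the set of all subset sums of `A` coming from
subsets of size at least `α`. -/
def sigmaAtLeast (A : Finset ℤ) (α : ℕ) : Finset ℤ :=
  (A.powerset.filter (fun B => α ≤ B.card)).image (fun B => B.sum id)


lemma mem_sigmaAtLeast {A : Finset ℤ} {α : ℕ} {x : ℤ} :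
    x ∈ sigmaAtLeast A α ↔ ∃ B, B ⊆ A ∧ α ≤ B.card ∧ B.sum id = x := by
  simp only [sigmaAtLeast, Finset.mem_image, Finset.mem_filter, Finset.mem_powerset]
  tauto

lemma sum_mem_sigmaAtLeast {A : Finset ℤ} {α : ℕ} (h : α ≤ A.card) :
    A.sum id ∈ sigmaAtLeast A α :=
  mem_sigmaAtLeast.mpr ⟨A, Finset.Subset.refl A, h, rfl⟩

lemma sigmaAtLeast_mono {A B : Finset ℤ} {α : ℕ} (h : A ⊆ B) :
    sigmaAtLeast A α ⊆ sigmaAtLeast B α := by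
  intro x hx
  obtain ⟨S, hS, hc, hs⟩ := mem_sigmaAtLeast.mp hx
  exact mem_sigmaAtLeast.mpr ⟨S, hS.trans h, hc, hs⟩

lemma sigma_le_sum {C : Finset ℤ} (hC : ∀ x ∈ C, 0 ≤ x) {κ : ℕ} {x : ℤ}
    (hx : x ∈ sigmaAtLeast C κ) : x ≤ C.sum id := by
  obtain ⟨B, hB, _, rfl⟩ := mem_sigmaAtLeast.mp hx
  exact Finset.sum_le_sum_of_subset_of_nonneg hB (fun i hi _ => hC i hi)

lemma sum_le_sigma {C : Finset ℤ} (hC : ∀ x ∈ C, x ≤ 0) {κ : ℕ} {x : ℤ}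
    (hx : x ∈ sigmaAtLeast C κ) : C.sum id ≤ x := by
  obtain ⟨B, hB, _, rfl⟩ := mem_sigmaAtLeast.mp hx
  have h := Finset.sum_sdiff (f := id) hB
  have h2 : (C \ B).sum id ≤ 0 :=
    Finset.sum_nonpos (fun i hi => hC i (Finset.mem_sdiff.mp hi).1)
  linarith

/-- key counting lemma for a set of positive integers, doubled form (no division). -/
lemma pos_card_lemma (κ : ℕ) (C : Finset ℤ) (hC : ∀ x ∈ C, 0 < x) (hκ : κ ≤ C.card) :
    C.card * (C.card + 1) + 2 ≤ 2 * (sigmaAtLeast C κ).card + κ * (κ + 1) := by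
  induction C using Finset.strongInduction with
  | _ C ih =>
    rcases eq_or_lt_of_le hκ with heq | hlt
    · have h1 : 1 ≤ (sigmaAtLeast C κ).card :=
        Finset.card_pos.mpr ⟨_, sum_mem_sigmaAtLeast hκ⟩
      rw [heq] at h1 ⊢
      linarith
    · -- κ < C.card
      have hne : C.Nonempty := Finset.card_pos.mp (by omega)
      set c := C.max' hne with hc
      have hcC : c ∈ C := C.max'_mem hne
      set C' := C.erase c with hC'
      have hss : C' ⊂ C := Finset.erase_ssubset hcC
      have hcard' : C'.card = C.card - 1 := Finset.card_erase_of_mem hcC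
      have hCpos' : ∀ x ∈ C', 0 < x := fun x hx => hC x (Finset.mem_of_mem_erase hx)
      have hκ' : κ ≤ C'.card := by omega
      have IH := ih C' hss hCpos' hκ'
      -- new sums
      set N : Finset ℤ := insert (C.sum id) (C'.image (fun x => C.sum id - x)) with hN
      have hsumC' : C'.sum id = C.sum id - c := Finset.sum_erase_eq_sub hcC
      have hNsub : N ⊆ sigmaAtLeast C κ := by
        intro z hz
        rcases Finset.mem_insert.mp hz with rfl | hz
        · exact sum_mem_sigmaAtLeast (le_of_lt hlt)
        · obtain ⟨x, hx, rfl⟩ := Finset.mem_image.mp hz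
          have hxC : x ∈ C := Finset.mem_of_mem_erase hx
          refine mem_sigmaAtLeast.mpr ⟨C.erase x, Finset.erase_subset x C, ?_, ?_⟩
          · rw [Finset.card_erase_of_mem hxC]; omega
          · exact Finset.sum_erase_eq_sub hxC
      have hNlarge : ∀ z ∈ N, C.sum id - c < z := by
        intro z hz
        rcases Finset.mem_insert.mp hz with rfl | hz
        · have := hC c hcC; linarith
        · obtain ⟨x, hx, rfl⟩ := Finset.mem_image.mp hz
          have hxc : x < c := lt_of_le_of_ne (C.le_max' x (Finset.mem_of_mem_erase hx))
            (Finset.ne_of_mem_erase hx)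
          linarith
      have hdisj : Disjoint N (sigmaAtLeast C' κ) := by
        rw [Finset.disjoint_left]
        intro z hzN hzS
        have h1 := hNlarge z hzN
        have h2 := sigma_le_sum (fun x hx => le_of_lt (hCpos' x hx)) hzS
        rw [hsumC'] at h2
        linarith
      have hNcard : N.card = C.card := by
        rw [hN, Finset.card_insert_of_notMem, Finset.card_image_of_injective _
          sub_right_injective]
        · omega
        · intro hmem
          obtain ⟨x, hx, hxe⟩ := Finset.mem_image.mp hmem
          have := hCpos' x hx
          omega
      have hunion : N ∪ sigmaAtLeast C' κ ⊆ sigmaAtLeast C κ :=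
        Finset.union_subset hNsub (sigmaAtLeast_mono (Finset.erase_subset c C))
      have hcardge : N.card + (sigmaAtLeast C' κ).card ≤ (sigmaAtLeast C κ).card := by
        rw [← Finset.card_union_of_disjoint hdisj]
        exact Finset.card_le_card hunion
      -- arithmetic
      obtain ⟨m, hm⟩ : ∃ m, C.card = m + 1 := ⟨C.card - 1, by omega⟩
      rw [hm] at hcard' ⊢
      rw [hcard'] at IH
      simp only [Nat.add_sub_cancel] at IH
      have : (m + 1) * (m + 1 + 1) = m * (m + 1) + 2 * (m + 1) := by ring
      rw [hm] at hNcard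
      linarith

lemma sigmaAtLeast_neg (A : Finset ℤ) (κ : ℕ) :
    sigmaAtLeast (A.image (fun x => -x)) κ = (sigmaAtLeast A κ).image (fun x => -x) := by
  ext x
  constructor
  · intro hx
    obtain ⟨B, hB, hc, rfl⟩ := mem_sigmaAtLeast.mp hx
    refine Finset.mem_image.mpr ⟨(B.image (fun x => -x)).sum id, mem_sigmaAtLeast.mpr
      ⟨B.image (fun x => -x), ?_, ?_, rfl⟩, ?_⟩
    · have h1 : (B.image (fun x => -x)) ⊆ (A.image (fun x => -x)).image (fun x => -x) :=
        Finset.image_subset_image hB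
      simpa [Finset.image_image, Function.comp] using h1
    · rw [Finset.card_image_of_injective _ neg_injective]; exact hc
    · rw [Finset.sum_image (fun a _ b _ h => neg_injective h)]
      simp only [id_eq]
      rw [Finset.sum_neg_distrib, neg_neg]
  · intro hx
    obtain ⟨y, hy, rfl⟩ := Finset.mem_image.mp hx
    obtain ⟨B, hB, hc, rfl⟩ := mem_sigmaAtLeast.mp hy
    refine mem_sigmaAtLeast.mpr ⟨B.image (fun x => -x), Finset.image_subset_image hB, ?_, ?_⟩
    · rw [Finset.card_image_of_injective _ neg_injective]; exact hc
    · rw [Finset.sum_image (fun a _ b _ h => neg_injective h)]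
      simp only [id_eq]
      rw [Finset.sum_neg_distrib]

theorem stmt_10 (n p α : ℕ) (hn : 1 ≤ n) (hp : 1 ≤ p) (A : Finset ℤ)
    (hneg : (A.filter (fun x => x < 0)).card = n)
    (hpos : (A.filter (fun x => 0 < x)).card = p)
    (h0 : (0 : ℤ) ∈ A)
    (hα : α ≤ n + p + 1) (hαn : n < α) (hαp : p < α) :
    ((sigmaAtLeast A α).card : ℤ) ≥
      (n : ℤ) * ((n : ℤ) + 1) / 2 + (p : ℤ) * ((p : ℤ) + 1) / 2
        - ((α : ℤ) - (n : ℤ)) * ((α : ℤ) - (n : ℤ) - 1) / 2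
        - ((α : ℤ) - (p : ℤ)) * ((α : ℤ) - (p : ℤ) - 1) / 2 + 1 := by
  classical
  set Bn := A.filter (fun x => x < 0) with hBn
  set C := A.filter (fun x => 0 < x) with hCdef
  set κ := α - n - 1 with hκdef
  set lam := α - p - 1 with hlamdef
  have hκα : n + 1 + κ = α := by omega
  have hlamα : p + 1 + lam = α := by omega
  have hCpos : ∀ x ∈ C, 0 < x := fun x hx => (Finset.mem_filter.mp hx).2
  have hBneg : ∀ x ∈ Bn, x < 0 := fun x hx => (Finset.mem_filter.mp hx).2
  -- positive side
  have h1 := pos_card_lemma κ C hCpos (by rw [hpos]; omega)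
  rw [hpos] at h1
  -- negative side, via negation
  set D := Bn.image (fun x => -x) with hDdef
  have hDcard : D.card = n := by
    rw [hDdef, Finset.card_image_of_injective _ neg_injective, hneg]
  have hDpos : ∀ x ∈ D, 0 < x := by
    intro x hx
    obtain ⟨y, hy, rfl⟩ := Finset.mem_image.mp hx
    have := hBneg y hy; linarith
  have h2 := pos_card_lemma lam D hDpos (by rw [hDcard]; omega)
  rw [hDcard] at h2
  have hsigD : (sigmaAtLeast D lam).card = (sigmaAtLeast Bn lam).card := by
    rw [hDdef, sigmaAtLeast_neg, Finset.card_image_of_injective _ neg_injective]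
  rw [hsigD] at h2
  -- the two families
  set F1 := (sigmaAtLeast C κ).image (fun s => Bn.sum id + s) with hF1
  set F2 := (sigmaAtLeast Bn lam).image (fun s => C.sum id + s) with hF2
  have hF1card : F1.card = (sigmaAtLeast C κ).card :=
    Finset.card_image_of_injective _ (add_right_injective _)
  have hF2card : F2.card = (sigmaAtLeast Bn lam).card :=
    Finset.card_image_of_injective _ (add_right_injective _)
  have hF1sub : F1 ⊆ sigmaAtLeast A α := by
    intro x hx
    obtain ⟨s, hs, rfl⟩ := Finset.mem_image.mp hx
    obtain ⟨S, hSC, hScard, rfl⟩ := mem_sigmaAtLeast.mp hs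
    have hd : Disjoint Bn S := by
      rw [Finset.disjoint_left]
      intro a ha haS
      have := hBneg a ha
      have := hCpos a (hSC haS)
      linarith
    have h0n : (0 : ℤ) ∉ Bn ∪ S := by
      intro h
      rcases Finset.mem_union.mp h with h | h
      · exact absurd (hBneg 0 h) (by norm_num)
      · exact absurd (hCpos 0 (hSC h)) (by norm_num)
    refine mem_sigmaAtLeast.mpr ⟨insert 0 (Bn ∪ S), ?_, ?_, ?_⟩
    · exact Finset.insert_subset h0
        (Finset.union_subset (Finset.filter_subset _ _)
          (hSC.trans (Finset.filter_subset _ _)))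
    · rw [Finset.card_insert_of_notMem h0n, Finset.card_union_of_disjoint hd, hneg]
      omega
    · rw [Finset.sum_insert h0n, Finset.sum_union hd]
      simp [id]
  have hF2sub : F2 ⊆ sigmaAtLeast A α := by
    intro x hx
    obtain ⟨s, hs, rfl⟩ := Finset.mem_image.mp hx
    obtain ⟨S, hSB, hScard, rfl⟩ := mem_sigmaAtLeast.mp hs
    have hd : Disjoint C S := by
      rw [Finset.disjoint_left]
      intro a ha haS
      have := hCpos a ha
      have := hBneg a (hSB haS)
      linarith
    have h0n : (0 : ℤ) ∉ C ∪ S := by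
      intro h
      rcases Finset.mem_union.mp h with h | h
      · exact absurd (hCpos 0 h) (by norm_num)
      · exact absurd (hBneg 0 (hSB h)) (by norm_num)
    refine mem_sigmaAtLeast.mpr ⟨insert 0 (C ∪ S), ?_, ?_, ?_⟩
    · exact Finset.insert_subset h0
        (Finset.union_subset (Finset.filter_subset _ _)
          (hSB.trans (Finset.filter_subset _ _)))
    · rw [Finset.card_insert_of_notMem h0n, Finset.card_union_of_disjoint hd, hpos]
      omega
    · rw [Finset.sum_insert h0n, Finset.sum_union hd]
      simp [id]
  have hinter : F1 ∩ F2 ⊆ {Bn.sum id + C.sum id} := by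
    intro x hx
    obtain ⟨hx1, hx2⟩ := Finset.mem_inter.mp hx
    obtain ⟨s, hs, hxe⟩ := Finset.mem_image.mp hx1
    obtain ⟨t, ht, hxe2⟩ := Finset.mem_image.mp hx2
    have hs' : s ≤ C.sum id := sigma_le_sum (fun y hy => le_of_lt (hCpos y hy)) hs
    have ht' : Bn.sum id ≤ t := sum_le_sigma (fun y hy => le_of_lt (hBneg y hy)) ht
    have : x = Bn.sum id + C.sum id := by omega
    simp [this]
  have hcardinter : (F1 ∩ F2).card ≤ 1 :=
    (Finset.card_le_card hinter).trans (le_of_eq (Finset.card_singleton _))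
  have hcu := Finset.card_union_add_card_inter F1 F2
  have hus : (F1 ∪ F2).card ≤ (sigmaAtLeast A α).card :=
    Finset.card_le_card (Finset.union_subset hF1sub hF2sub)
  have h3 : (sigmaAtLeast C κ).card + (sigmaAtLeast Bn lam).card
      ≤ (sigmaAtLeast A α).card + 1 := by omega
  -- final arithmetic
  obtain ⟨a, ha⟩ := Nat.even_mul_succ_self n
  obtain ⟨b, hb⟩ := Nat.even_mul_succ_self p
  obtain ⟨u, hu⟩ := Nat.even_mul_succ_self κ
  obtain ⟨v, hv⟩ := Nat.even_mul_succ_self lam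
  have e1 : (n : ℤ) * ((n : ℤ) + 1) / 2 = (a : ℤ) := by
    have : (n : ℤ) * ((n : ℤ) + 1) = 2 * a := by exact_mod_cast (by omega : n * (n+1) = 2 * a)
    rw [this]; omega
  have e2 : (p : ℤ) * ((p : ℤ) + 1) / 2 = (b : ℤ) := by
    have : (p : ℤ) * ((p : ℤ) + 1) = 2 * b := by exact_mod_cast (by omega : p * (p+1) = 2 * b)
    rw [this]; omega
  have e3 : ((α : ℤ) - (n : ℤ)) * ((α : ℤ) - (n : ℤ) - 1) / 2 = (u : ℤ) := by
    have hαn' : (α : ℤ) - (n : ℤ) = (κ : ℤ) + 1 := by omega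
    rw [hαn']
    have : ((κ : ℤ) + 1) * ((κ : ℤ) + 1 - 1) = 2 * u := by
      have : (κ : ℤ) * ((κ : ℤ) + 1) = 2 * u := by
        exact_mod_cast (by omega : κ * (κ+1) = 2 * u)
      linarith [this]
    rw [this]; omega
  have e4 : ((α : ℤ) - (p : ℤ)) * ((α : ℤ) - (p : ℤ) - 1) / 2 = (v : ℤ) := by
    have hαp' : (α : ℤ) - (p : ℤ) = (lam : ℤ) + 1 := by omega
    rw [hαp']
    have : ((lam : ℤ) + 1) * ((lam : ℤ) + 1 - 1) = 2 * v := by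
      have : (lam : ℤ) * ((lam : ℤ) + 1) = 2 * v := by
        exact_mod_cast (by omega : lam * (lam+1) = 2 * v)
      linarith [this]
    rw [this]; omega
  rw [e1, e2, e3, e4]
  rw [hb, hu] at h1
  rw [ha, hv] at h2
  omega
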